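/- For 0 < γ < σ, 0 ≤ α ≤ ρ with ρ > 0, the integral ∫₀^∞ (csch(ρ t^γ)/e^{α t^γ}) t^{σ−1} dt equals (2 Γ(σ/γ) / (γ (2ρ)^{σ/γ})) · ζ(σ/γ, (α+ρ)/(2ρ)), where ζ(s,a) = Σ_{k=0}^∞ 1/(k+a)^s is the Hurwitz zeta function and csch(u) = 2/(e^u − e^{−u}). -/

import Mathlib

open Real Set MeasureTheory

/-- For 0 < γ < σ, 0 ≤ α ≤ ρ (ρ > 0):
∫₀^∞ csch(ρ t^γ)/e^{α t^γ} t^{σ−1} dt = (2Γ(σ/γ)/(γ(2ρ)^{σ/γ})) ζ(σ/γ, (α+ρ)/(2ρ)). -/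
theorem stmt0 (σ γ α ρ : ℝ) (hγ : 0 < γ) (hγσ : γ < σ) (hα : 0 ≤ α) (hαρ : α ≤ ρ)
    (hρ : 0 < ρ) :
    (∫ t in Set.Ioi (0:ℝ),
      (2 / (Real.exp (ρ * t ^ γ) - Real.exp (-(ρ * t ^ γ)))) / Real.exp (α * t ^ γ)
        * t ^ (σ - 1))
    = 2 * Real.Gamma (σ / γ) / (γ * (2 * ρ) ^ (σ / γ))
      * ∑' k : ℕ, 1 / ((k : ℝ) + (α + ρ) / (2 * ρ)) ^ (σ / γ) := by
  set s : ℝ := σ / γ with hs_def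
  have hs1 : 1 < s := (one_lt_div hγ).mpr hγσ
  have hs0 : 0 < s := lt_trans one_pos hs1
  set a : ℝ := (α + ρ) / (2 * ρ) with ha_def
  have ha0 : 0 < a := div_pos (by linarith) (by linarith)
  have hb : ∀ k : ℕ, 0 < 2 * ρ * ((k : ℝ) + a) := fun k => by positivity
  set G : ℝ → ℝ :=
    fun u => 2 / (exp (ρ * u) - exp (-(ρ * u))) / exp (α * u) * u ^ (s - 1) / γ with hG
  set Gk : ℕ → ℝ → ℝ :=
    fun k u => 2 / γ * (u ^ (s - 1) * exp (-(2 * ρ * ((k : ℝ) + a) * u))) with hGk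
  -- Step A: substitution u = t ^ γ
  have hA : (∫ t in Set.Ioi (0:ℝ),
      (2 / (Real.exp (ρ * t ^ γ) - Real.exp (-(ρ * t ^ γ)))) / Real.exp (α * t ^ γ)
        * t ^ (σ - 1)) = ∫ u in Ioi (0:ℝ), G u := by
    rw [← integral_comp_rpow_Ioi_of_pos (g := G) hγ]
    refine setIntegral_congr_fun measurableSet_Ioi fun t ht => ?_
    have ht0 : (0:ℝ) < t := ht
    have h1 : (t ^ γ) ^ (s - 1) = t ^ (σ - γ) := by
      rw [← rpow_mul ht0.le]
      congr 1
      rw [hs_def]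
      field_simp
    have hE1 : (1:ℝ) < exp (ρ * t ^ γ) := by
      rw [show (1:ℝ) = exp 0 by simp]
      exact exp_lt_exp.mpr (by positivity)
    have hne : exp (ρ * t ^ γ) - exp (-(ρ * t ^ γ)) ≠ 0 := by
      have : exp (-(ρ * t ^ γ)) < exp (ρ * t ^ γ) := exp_lt_exp.mpr (by nlinarith [rpow_pos_of_pos ht0 γ])
      linarith
    rw [smul_eq_mul]
    simp only [hG, h1]
    rw [show σ - 1 = (γ - 1) + (σ - γ) by ring, rpow_add ht0]
    field_simp
  -- Step B: pointwise expansion into a geometric series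
  have hB : ∀ u ∈ Ioi (0:ℝ), HasSum (fun k : ℕ => Gk k u) (G u) := by
    intro u hu
    have hu0 : (0:ℝ) < u := hu
    have hr0 : (0:ℝ) ≤ exp (-(2 * ρ * u)) := (exp_pos _).le
    have hr1 : exp (-(2 * ρ * u)) < 1 := by
      rw [exp_lt_one_iff]; nlinarith
    have hgeo := (hasSum_geometric_of_lt_one hr0 hr1).mul_left
      (2 / γ * (u ^ (s - 1) * exp (-((ρ + α) * u))))
    have hterm : ∀ k : ℕ,
        2 / γ * (u ^ (s - 1) * exp (-((ρ + α) * u))) * exp (-(2 * ρ * u)) ^ k = Gk k u := by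
      intro k
      have h2ρa : 2 * ρ * a = α + ρ := by
        rw [ha_def]; field_simp
      have hmerge : exp (-((ρ + α) * u)) * exp ((k : ℝ) * -(2 * ρ * u))
          = exp (-(2 * ρ * ((k : ℝ) + a) * u)) := by
        rw [← exp_add]
        congr 1
        linear_combination u * h2ρa
      simp only [hGk]
      rw [← exp_nat_mul, ← hmerge]
      ring
    rw [funext hterm] at hgeo
    suffices hGu : G u = 2 / γ * (u ^ (s - 1) * exp (-((ρ + α) * u))) * (1 - exp (-(2 * ρ * u)))⁻¹ by
      rw [hGu]; exact hgeo
    have h1r : (1:ℝ) - exp (-(2 * ρ * u)) ≠ 0 := by linarith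
    have hDne : exp (ρ * u) - exp (-(ρ * u)) ≠ 0 := by
      have : exp (-(ρ * u)) < exp (ρ * u) := exp_lt_exp.mpr (by nlinarith)
      linarith
    rw [eq_mul_inv_iff_mul_eq₀ h1r]
    have hfac : (1:ℝ) - exp (-(2 * ρ * u))
        = (exp (ρ * u) - exp (-(ρ * u))) * exp (-(ρ * u)) := by
      rw [sub_mul, ← exp_add, ← exp_add,
        show ρ * u + -(ρ * u) = 0 by ring,
        show -(ρ * u) + -(ρ * u) = -(2 * ρ * u) by ring, exp_zero]
    have hsplit : exp (-((ρ + α) * u)) = exp (-(ρ * u)) * (exp (α * u))⁻¹ := by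
      rw [← exp_neg, ← exp_add]
      congr 1
      ring
    rw [hfac, hsplit]
    simp only [hG]
    field_simp
  -- Step C: integrability of each term
  have hint : ∀ k : ℕ, IntegrableOn (Gk k) (Ioi 0) := by
    intro k
    have h0 := integrableOn_rpow_mul_exp_neg_mul_rpow (s := s - 1) (p := 1)
      (b := 2 * ρ * ((k : ℝ) + a)) (by linarith) zero_lt_one (hb k)
    simp only [rpow_one] at h0
    have heq : (fun x : ℝ => 2 / γ * (x ^ (s - 1) * exp (-(2 * ρ * ((k : ℝ) + a)) * x))) = Gk k := by
      funext x
      simp only [hGk, neg_mul]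
    rw [← heq]
    exact h0.const_mul (2 / γ)
  -- value of each integral
  have hval : ∀ k : ℕ, (∫ u in Ioi (0:ℝ), Gk k u)
      = 2 / γ * ((1 / (2 * ρ * ((k : ℝ) + a))) ^ s * Real.Gamma s) := by
    intro k
    simp only [hGk]
    rw [MeasureTheory.integral_const_mul]
    congr 1
    have h1 := Real.integral_rpow_mul_exp_neg_mul_Ioi hs0 (hb k)
    rw [← h1]
  have Sa : Summable (fun k : ℕ => 1 / ((k : ℝ) + a) ^ s) := by
    have h := (Real.summable_one_div_nat_add_rpow a s).mpr hs1
    exact h.congr fun k => by rw [abs_of_pos (by positivity)]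
  have hterm2 : ∀ k : ℕ, 2 / γ * ((1 / (2 * ρ * ((k : ℝ) + a))) ^ s * Real.Gamma s)
      = 2 * Real.Gamma s / (γ * (2 * ρ) ^ s) * (1 / ((k : ℝ) + a) ^ s) := by
    intro k
    rw [one_div, mul_inv, ← one_div, ← one_div, mul_rpow (by positivity) (by positivity),
      one_div, one_div, inv_rpow (by positivity), inv_rpow (by positivity)]
    have h1 : ((2:ℝ) * ρ) ^ s ≠ 0 := by positivity
    have h2 : (((k:ℕ):ℝ) + a) ^ s ≠ 0 := by positivity
    field_simp
  -- summability of the integrals of norms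
  have hnorm : ∀ k : ℕ, (∫ u in Ioi (0:ℝ), ‖Gk k u‖) = ∫ u in Ioi (0:ℝ), Gk k u := by
    intro k
    refine setIntegral_congr_fun measurableSet_Ioi fun u hu => ?_
    have hu0 : (0:ℝ) < u := hu
    rw [norm_of_nonneg (by simp only [hGk]; positivity)]
  have hF_sum : Summable fun k : ℕ => ∫ u in Ioi (0:ℝ), ‖Gk k u‖ := by
    refine ((Sa.mul_left (2 * Real.Gamma s / (γ * (2 * ρ) ^ s))).congr fun k => ?_)
    rw [hnorm k, hval k, hterm2 k]
  -- swap sum and integral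
  have key := hasSum_integral_of_summable_integral_norm
    (μ := volume.restrict (Ioi (0:ℝ))) (F := Gk) hint hF_sum
  have hGsum : (∫ u in Ioi (0:ℝ), ∑' k : ℕ, Gk k u) = ∫ u in Ioi (0:ℝ), G u :=
    setIntegral_congr_fun measurableSet_Ioi fun u hu => (hB u hu).tsum_eq
  rw [hA, ← hGsum, ← key.tsum_eq]
  rw [tsum_congr fun k => (hval k).trans (hterm2 k)]
  exact tsum_mul_left
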